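/- Let f be a DR-submodular function on the box B = ∏_{i=1}^n {0,…,K_i}, let x, y ∈ B, and set b_i = max(y_i − x_i, 0) for each i. Then f(y) − f(x ⊓ y) ≤ Σ_{i=1}^n [f((x ⊓ y) + b_i·e_i) − f(x ⊓ y)]. -/

import Mathlib

/-- The `i`-th standard basis vector in `ℤ^n`. -/
def stdBasis (n : ℕ) (i : Fin n) : Fin n → ℤ := fun j => if j = i then 1 else 0

/-- Membership in the integer box `∏ i {0, …, K i}`. -/
def inBox {n : ℕ} (K : Fin n → ℤ) (x : Fin n → ℤ) : Prop :=
  ∀ i, 0 ≤ x i ∧ x i ≤ K i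

/-- Lattice submodularity on the box. -/
def LatticeSubmodular {n : ℕ} (K : Fin n → ℤ) (f : (Fin n → ℤ) → ℝ) : Prop :=
  ∀ x y, inBox K x → inBox K y →
    f (fun i => min (x i) (y i)) + f (fun i => max (x i) (y i)) ≤ f x + f y

/-- DR-submodularity (diminishing returns) on the box. -/
def DRSubmodular {n : ℕ} (K : Fin n → ℤ) (f : (Fin n → ℤ) → ℝ) : Prop :=
  ∀ x y : Fin n → ℤ, inBox K x → inBox K y → (∀ i, x i ≤ y i) →
    ∀ (i : Fin n) (c : ℤ), 0 < c → inBox K (y + c • stdBasis n i) →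
      f (y + c • stdBasis n i) - f y ≤ f (x + c • stdBasis n i) - f x

/-- A modular (separable) function on the box. -/
def IsModular {n : ℕ} (K : Fin n → ℤ) (g : (Fin n → ℤ) → ℝ) : Prop :=
  ∃ gi : Fin n → ℤ → ℝ, ∀ x, inBox K x → g x = ∑ i, gi i (x i)

/-- for DR-submodular `f` and `x, y` in the box, with
`bᵢ = max (yᵢ - xᵢ) 0`, we have
`f(y) - f(x ⊓ y) ≤ ∑ᵢ [f((x ⊓ y) + bᵢ eᵢ) - f(x ⊓ y)]`. -/
theorem dr_sub_inf_le_sum' {n : ℕ} (K : Fin n → ℤ) (hK : ∀ i, 1 ≤ K i)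
    (f : (Fin n → ℤ) → ℝ) (hf : DRSubmodular K f)
    (x y : Fin n → ℤ) (hx : inBox K x) (hy : inBox K y) :
    f y - f (fun j => min (x j) (y j)) ≤
      ∑ i, (f ((fun j => min (x j) (y j)) + (max (y i - x i) 0) • stdBasis n i) -
        f (fun j => min (x j) (y j))) := by
  set m : Fin n → ℤ := fun j => min (x j) (y j) with hm
  have hmbox : inBox K m := fun i =>
    ⟨le_min (hx i).1 (hy i).1, le_trans (min_le_left _ _) (hx i).2⟩
  set z : ℕ → Fin n → ℤ := fun k j => if (j : ℕ) < k then y j else m j with hz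
  have hzbox : ∀ k, inBox K (z k) := by
    intro k i
    by_cases h : (i : ℕ) < k
    · simp only [hz, h, if_pos]; exact hy i
    · simp only [hz, h, if_neg, not_false_iff]; exact hmbox i
  have key : ∀ k, k ≤ n → f (z k) - f m ≤
      ∑ i ∈ Finset.univ.filter (fun i : Fin n => (i : ℕ) < k),
        (f (m + (max (y i - x i) 0) • stdBasis n i) - f m) := by
    intro k hk
    induction k with
    | zero =>
      have : z 0 = m := by funext j; simp [hz]
      simp [this]
    | succ k ih =>
      have hkn : k < n := hk
      set i : Fin n := ⟨k, hkn⟩ with hi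
      set b : ℤ := max (y i - x i) 0 with hb
      have hbm : m i + b = y i := by
        simp only [hm, hb]; omega
      have hsplit : Finset.univ.filter (fun j : Fin n => (j : ℕ) < k + 1)
          = insert i (Finset.univ.filter (fun j : Fin n => (j : ℕ) < k)) := by
        ext j
        simp only [Finset.mem_filter, Finset.mem_univ, true_and, Finset.mem_insert, Fin.ext_iff]
        have : (i : ℕ) = k := rfl
        omega
      have hnotmem : i ∉ Finset.univ.filter (fun j : Fin n => (j : ℕ) < k) := by
        simp [hi]
      have hik : (i : ℕ) = k := rfl
      have hstep : f (z (k + 1)) - f (z k) ≤ f (m + b • stdBasis n i) - f m := by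
        rcases eq_or_lt_of_le (le_max_right (y i - x i) 0) with h0 | hpos
        · -- b = 0
          have hb0 : b = 0 := h0.symm
          have hzb : z (k + 1) = z k := by
            funext j
            simp only [hz]
            by_cases hj : (j : ℕ) < k
            · simp [hj, Nat.lt_succ_of_lt hj]
            · by_cases hj' : (j : ℕ) < k + 1
              · have hji : j = i := by apply Fin.ext; rw [hik]; omega
                have hym : y j = m j := by rw [hji]; simp only [hm, hb] at hb0 ⊢; omega
                simp [hj, hj', hym]
              · simp [hj, hj']
          have hme : m + b • stdBasis n i = m := by
            funext j; simp [hb0]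
          rw [hzb, hme]; simp
        · -- b > 0
          have hmle : ∀ j, m j ≤ z k j := by
            intro j
            by_cases hj : (j : ℕ) < k
            · simp only [hz, hj, if_pos]; exact min_le_right _ _
            · simp [hz, hj]
          have hzk1 : z k + b • stdBasis n i = z (k + 1) := by
            funext j
            by_cases hji : j = i
            · have hjk : (j : ℕ) = k := by rw [hji, hik]
              simp only [Pi.add_apply, Pi.smul_apply, stdBasis, if_pos hji, smul_eq_mul,
                mul_one, hz]
              rw [if_neg (by omega : ¬ (j : ℕ) < k), if_pos (by omega : (j : ℕ) < k + 1)]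
              rw [hji]; exact hbm
            · have hjk : (j : ℕ) ≠ k := fun h => hji (by apply Fin.ext; rw [hik]; exact h)
              simp only [Pi.add_apply, Pi.smul_apply, stdBasis, if_neg hji, smul_eq_mul,
                mul_zero, add_zero, hz]
              by_cases hjk' : (j : ℕ) < k
              · rw [if_pos hjk', if_pos (by omega)]
              · rw [if_neg hjk', if_neg (by omega)]
          have hbox1 : inBox K (z k + b • stdBasis n i) := by
            rw [hzk1]; exact hzbox (k + 1)
          have := hf m (z k) hmbox (hzbox k) hmle i b hpos hbox1
          rw [hzk1] at this
          linarith
      rw [hsplit, Finset.sum_insert hnotmem]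
      have hih := ih (Nat.le_of_succ_le hk)
      linarith
  have hfin := key n le_rfl
  have hzn : z n = y := by
    funext j; simp [hz, j.isLt]
  have hfilter : Finset.univ.filter (fun j : Fin n => (j : ℕ) < n) = Finset.univ := by
    ext j; simp [j.isLt]
  rw [hzn, hfilter] at hfin
  exact hfin
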